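/- Let x⋆ be a mode of f and set s⋆ = f(x⋆). Then there exists δ > 0 such that the constant C = sup_{x ∈ closedBall(x⋆,δ)} max{√(λ_max(x)), 2/√(λ_min(x))} is finite, where λ_max(x) and λ_min(x) denote the largest and smallest eigenvalues of −∇²f(x), and for every s ∈ (s⋆ − δ²/C², s⋆), letting C_s denote the connected component of {f ≥ s} containing x⋆, one has closedBall(x⋆, √(s⋆ − s)/C) ⊆ C_s ⊆ ball(x⋆, C·√(s⋆ − s)). -/

import Mathlib

open Metric Set Filter MeasureTheory Topology
open scoped Topology RealInnerProductSpace

abbrev Euc (d : ℕ) := EuclideanSpace ℝ (Fin d)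

/-- The Hessian of `f`, as the derivative of the gradient field. -/
noncomputable def hess {d : ℕ} (f : Euc d → ℝ) (x : Euc d) : Euc d →L[ℝ] Euc d :=
  fderiv ℝ (gradient f) x

/-- The standing assumptions on the density `f`: nonnegative, integrable, vanishing at
infinity, twice differentiable with bounded and uniformly continuous zeroth, first and
second derivatives, and Morse (nonsingular Hessian at every critical point). -/
def IsNiceDensity {d : ℕ} (f : Euc d → ℝ) : Prop :=
  (∀ x, 0 ≤ f x) ∧
  Integrable f volume ∧
  Tendsto f (cocompact (Euc d)) (𝓝 0) ∧
  Differentiable ℝ f ∧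
  Differentiable ℝ (gradient f) ∧
  (∃ M, ∀ x, |f x| ≤ M) ∧
  (∃ M, ∀ x, ‖gradient f x‖ ≤ M) ∧
  (∃ M, ∀ x, ‖hess f x‖ ≤ M) ∧
  UniformContinuous f ∧
  UniformContinuous (gradient f) ∧
  UniformContinuous (hess f) ∧
  (∀ x, gradient f x = 0 → Function.Bijective (hess f x))

/-- `γ` is the gradient ascent curve of `f` starting at `x`, defined on `[0, ∞)`. -/
def IsGradFlow {d : ℕ} (f : Euc d → ℝ) (x : Euc d) (γ : ℝ → Euc d) : Prop :=
  γ 0 = x ∧ ∀ t ∈ Ici (0:ℝ), HasDerivWithinAt γ (gradient f (γ t)) (Ici 0) t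

/-- The largest eigenvalue of `-∇²f(x)`, expressed via the Rayleigh quotient. -/
noncomputable def lamMax {d : ℕ} (f : Euc d → ℝ) (x : Euc d) : ℝ :=
  sSup {r : ℝ | ∃ v : Euc d, ‖v‖ = 1 ∧ ⟪-((hess f x) v), v⟫ = r}

/-- The smallest eigenvalue of `-∇²f(x)`, expressed via the Rayleigh quotient. -/
noncomputable def lamMin {d : ℕ} (f : Euc d → ℝ) (x : Euc d) : ℝ :=
  sInf {r : ℝ | ∃ v : Euc d, ‖v‖ = 1 ∧ ⟪-((hess f x) v), v⟫ = r}

section Ray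
variable {d : ℕ}

def ray (A : Euc d →L[ℝ] Euc d) : Set ℝ := {r : ℝ | ∃ v : Euc d, ‖v‖ = 1 ∧ ⟪-(A v), v⟫ = r}

lemma lamMax_eq (f : Euc d → ℝ) (x : Euc d) : lamMax f x = sSup (ray (hess f x)) := rfl
lemma lamMin_eq (f : Euc d → ℝ) (x : Euc d) : lamMin f x = sInf (ray (hess f x)) := rfl

lemma exists_unit (hd : 0 < d) : ∃ v : Euc d, ‖v‖ = 1 := by
  refine ⟨EuclideanSpace.single ⟨0, hd⟩ 1, by simp⟩

lemma ray_nonempty (hd : 0 < d) (A : Euc d →L[ℝ] Euc d) : (ray A).Nonempty := by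
  obtain ⟨v, hv⟩ := exists_unit hd
  exact ⟨_, v, hv, rfl⟩

lemma ray_abs_le (A : Euc d →L[ℝ] Euc d) {r : ℝ} (hr : r ∈ ray A) : |r| ≤ ‖A‖ := by
  obtain ⟨v, hv, rfl⟩ := hr
  calc |⟪-(A v), v⟫| ≤ ‖-(A v)‖ * ‖v‖ := abs_real_inner_le_norm _ _
  _ ≤ (‖A‖ * ‖v‖) * ‖v‖ := by
      rw [norm_neg]; exact mul_le_mul_of_nonneg_right (A.le_opNorm v) (norm_nonneg _)
  _ = ‖A‖ := by rw [hv]; ring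

lemma ray_bddAbove (A : Euc d →L[ℝ] Euc d) : BddAbove (ray A) :=
  ⟨‖A‖, fun r hr => (abs_le.1 (ray_abs_le A hr)).2⟩

lemma ray_bddBelow (A : Euc d →L[ℝ] Euc d) : BddBelow (ray A) :=
  ⟨-‖A‖, fun r hr => (abs_le.1 (ray_abs_le A hr)).1⟩

lemma rayleigh_le_lamMax (hd : 0 < d) (f : Euc d → ℝ) (x : Euc d) {v : Euc d} (hv : ‖v‖ = 1) :
    ⟪-((hess f x) v), v⟫ ≤ lamMax f x :=
  le_csSup (ray_bddAbove _) ⟨v, hv, rfl⟩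

lemma lamMin_le_rayleigh (hd : 0 < d) (f : Euc d → ℝ) (x : Euc d) {v : Euc d} (hv : ‖v‖ = 1) :
    lamMin f x ≤ ⟪-((hess f x) v), v⟫ :=
  csInf_le (ray_bddBelow _) ⟨v, hv, rfl⟩

lemma lamMin_le_lamMax (hd : 0 < d) (f : Euc d → ℝ) (x : Euc d) : lamMin f x ≤ lamMax f x := by
  obtain ⟨v, hv⟩ := exists_unit (d := d) hd
  exact (lamMin_le_rayleigh hd f x hv).trans (rayleigh_le_lamMax hd f x hv)

lemma lamMax_le_norm (hd : 0 < d) (f : Euc d → ℝ) (x : Euc d) : lamMax f x ≤ ‖hess f x‖ :=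
  csSup_le (ray_nonempty hd _) (fun r hr => (abs_le.1 (ray_abs_le _ hr)).2)

-- Lipschitz-type comparison for lamMin/lamMax
lemma rayleigh_diff_le (A B : Euc d →L[ℝ] Euc d) {v : Euc d} (hv : ‖v‖ = 1) :
    |⟪-(A v), v⟫ - ⟪-(B v), v⟫| ≤ ‖A - B‖ := by
  have : ⟪-(A v), v⟫ - ⟪-(B v), v⟫ = ⟪-((A - B) v), v⟫ := by
    simp [inner_neg_left, ContinuousLinearMap.sub_apply, inner_sub_left]; ring
  rw [this]
  exact ray_abs_le (A - B) ⟨v, hv, rfl⟩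

lemma lamMin_ge_of_close (hd : 0 < d) (f : Euc d → ℝ) (x y : Euc d) :
    lamMin f y - ‖hess f x - hess f y‖ ≤ lamMin f x := by
  rw [lamMin_eq f x]
  refine le_csInf (ray_nonempty hd _) ?_
  rintro r ⟨v, hv, rfl⟩
  have h1 := lamMin_le_rayleigh hd f y hv
  have h2 := (abs_le.1 (rayleigh_diff_le (hess f x) (hess f y) hv)).1
  linarith

lemma lamMax_le_of_close (hd : 0 < d) (f : Euc d → ℝ) (x y : Euc d) :
    lamMax f x ≤ lamMax f y + ‖hess f x - hess f y‖ := by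
  rw [lamMax_eq f x]
  refine csSup_le (ray_nonempty hd _) ?_
  rintro r ⟨v, hv, rfl⟩
  have h1 := rayleigh_le_lamMax hd f y hv
  have h2 := (abs_le.1 (rayleigh_diff_le (hess f x) (hess f y) hv)).2
  linarith

end Ray

section Calc
variable {d : ℕ} {f : Euc d → ℝ}

lemma inner_gradient_eq (hf : Differentiable ℝ f) (y v : Euc d) :
    ⟪gradient f y, v⟫ = fderiv ℝ f y v := by
  rw [gradient, InnerProductSpace.toDual_symm_apply]

lemma line_hasDerivAt (x v : Euc d) (t : ℝ) :
    HasDerivAt (fun t : ℝ => x + t • v) v t := by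
  exact ((hasDerivAt_const t x).add ((hasDerivAt_id t).smul_const v)).congr_deriv (by simp)

lemma phi_hasDerivAt (hf : Differentiable ℝ f) (x v : Euc d) (t : ℝ) :
    HasDerivAt (fun t : ℝ => f (x + t • v)) ⟪gradient f (x + t • v), v⟫ t := by
  have h1 : HasFDerivAt f (InnerProductSpace.toDual ℝ (Euc d) (gradient f (x + t • v)))
      (x + t • v) := (hf _).hasGradientAt.hasFDerivAt
  exact h1.comp_hasDerivAt t (line_hasDerivAt x v t)

lemma grad_line_hasDerivAt (hg : Differentiable ℝ (gradient f)) (x v : Euc d) (t : ℝ) :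
    HasDerivAt (fun t : ℝ => gradient f (x + t • v)) ((hess f (x + t • v)) v) t := by
  have h1 : HasFDerivAt (gradient f) (hess f (x + t • v)) (x + t • v) := (hg _).hasFDerivAt
  exact h1.comp_hasDerivAt t (line_hasDerivAt x v t)

lemma g_hasDerivAt (hg : Differentiable ℝ (gradient f)) (x v : Euc d) (t : ℝ) :
    HasDerivAt (fun t : ℝ => ⟪gradient f (x + t • v), v⟫)
      ⟪(hess f (x + t • v)) v, v⟫ t := by
  simpa using (grad_line_hasDerivAt hg x v t).inner ℝ (hasDerivAt_const t v)

/-- If `h` has everywhere nonnegative derivative on `[0,u]`, then `h 0 ≤ h u`. -/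
lemma le_of_deriv_nonneg {h h' : ℝ → ℝ} {u : ℝ} (hu : 0 ≤ u)
    (hd : ∀ t, HasDerivAt h (h' t) t)
    (hpos : ∀ t ∈ Icc (0:ℝ) u, 0 ≤ h' t) : h 0 ≤ h u := by
  have hmono : MonotoneOn h (Icc (0:ℝ) u) := by
    apply monotoneOn_of_deriv_nonneg (convex_Icc 0 u)
    · exact Continuous.continuousOn (by
        exact Differentiable.continuous (fun t => (hd t).differentiableAt))
    · exact fun t ht => ((hd t).differentiableAt).differentiableWithinAt
    · intro t ht
      rw [interior_Icc] at ht
      rw [(hd t).deriv]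
      exact hpos t (Ioo_subset_Icc_self ht)
  exact hmono ⟨le_refl 0, hu⟩ ⟨hu, le_refl u⟩ hu

lemma hasDerivAt_mul_self (a t : ℝ) : HasDerivAt (fun s => a * s) a t := by
  simpa using (hasDerivAt_id t).const_mul a

lemma hasDerivAt_quad (a t : ℝ) : HasDerivAt (fun s : ℝ => a * (s * s)) (a * (2 * t)) t := by
  have := ((hasDerivAt_id t).mul (hasDerivAt_id t)).const_mul a
  simpa [two_mul, mul_add, id] using this

end Calc

section Taylor
variable {d : ℕ} {f : Euc d → ℝ}

lemma taylor_upper (hf : Differentiable ℝ f) (hg : Differentiable ℝ (gradient f))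
    (x v : Euc d) (hgrad : gradient f x = 0) (a : ℝ)
    (ha : ∀ t ∈ Icc (0:ℝ) 1, ⟪(hess f (x + t • v)) v, v⟫ ≤ -a) :
    f (x + v) ≤ f x - a / 2 := by
  set g : ℝ → ℝ := fun t => ⟪gradient f (x + t • v), v⟫ with hgdef
  have hg0 : g 0 = 0 := by simp only [hgdef, zero_smul, add_zero, hgrad, inner_zero_left]
  have hgd : ∀ t, HasDerivAt g ⟪(hess f (x + t • v)) v, v⟫ t := g_hasDerivAt hg x v
  have step1 : ∀ t ∈ Icc (0:ℝ) 1, g t ≤ -(a * t) := by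
    intro t ht
    have key := le_of_deriv_nonneg (h := fun s => -(g s) - a * s)
      (h' := fun s => -⟪(hess f (x + s • v)) v, v⟫ - a) ht.1
      (fun s => (hgd s).neg.sub (hasDerivAt_mul_self a s))
      (fun s hs => by
        have := ha s ⟨hs.1, hs.2.trans ht.2⟩
        linarith)
    simp only [hg0] at key
    linarith [key]
  have hφd : ∀ t, HasDerivAt (fun t : ℝ => f (x + t • v)) (g t) t := phi_hasDerivAt hf x v
  have key2 := le_of_deriv_nonneg (h := fun t : ℝ => -(f (x + t • v)) - a/2 * (t * t))
    (h' := fun t => -(g t) - a/2 * (2 * t)) zero_le_one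
    (fun t => (hφd t).neg.sub (hasDerivAt_quad (a/2) t))
    (fun t ht => by
      have := step1 t ht
      linarith)
  simp only [zero_smul, add_zero, one_smul, mul_zero, mul_one, sub_zero] at key2
  linarith [key2]

lemma taylor_lower (hf : Differentiable ℝ f) (hg : Differentiable ℝ (gradient f))
    (x v : Euc d) (hgrad : gradient f x = 0) (b : ℝ)
    (hb : ∀ t ∈ Icc (0:ℝ) 1, -b ≤ ⟪(hess f (x + t • v)) v, v⟫) :
    f x - b / 2 ≤ f (x + v) := by
  set g : ℝ → ℝ := fun t => ⟪gradient f (x + t • v), v⟫ with hgdef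
  have hg0 : g 0 = 0 := by simp only [hgdef, zero_smul, add_zero, hgrad, inner_zero_left]
  have hgd : ∀ t, HasDerivAt g ⟪(hess f (x + t • v)) v, v⟫ t := g_hasDerivAt hg x v
  have step1 : ∀ t ∈ Icc (0:ℝ) 1, -(b * t) ≤ g t := by
    intro t ht
    have key := le_of_deriv_nonneg (h := fun s => g s + b * s)
      (h' := fun s => ⟪(hess f (x + s • v)) v, v⟫ + b) ht.1
      (fun s => (hgd s).add (hasDerivAt_mul_self b s))
      (fun s hs => by
        have := hb s ⟨hs.1, hs.2.trans ht.2⟩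
        linarith)
    simp only [hg0] at key
    linarith [key]
  have hφd : ∀ t, HasDerivAt (fun t : ℝ => f (x + t • v)) (g t) t := phi_hasDerivAt hf x v
  have key2 := le_of_deriv_nonneg (h := fun t : ℝ => f (x + t • v) + b/2 * (t * t))
    (h' := fun t => g t + b/2 * (2 * t)) zero_le_one
    (fun t => (hφd t).add (hasDerivAt_quad (b/2) t))
    (fun t ht => by
      have := step1 t ht
      linarith)
  simp only [zero_smul, add_zero, one_smul, mul_zero, mul_one, sub_zero] at key2
  linarith [key2]

end Taylor

section SecondOrder
variable {d : ℕ} {f : Euc d → ℝ} {xs : Euc d}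

lemma grad_zero_at_max (hf : Differentiable ℝ f) (hmode : IsLocalMax f xs) :
    gradient f xs = 0 := by
  rw [gradient, hmode.fderiv_eq_zero]
  simp

lemma hess_neg_semidef_at_max (hf : Differentiable ℝ f) (hg : Differentiable ℝ (gradient f))
    (hmode : IsLocalMax f xs) (v : Euc d) : ⟪(hess f xs) v, v⟫ ≤ 0 := by
  by_contra hq
  push_neg at hq
  set q : ℝ := ⟪(hess f xs) v, v⟫ with hqdef
  set g : ℝ → ℝ := fun t => ⟪gradient f (xs + t • v), v⟫ with hgdef
  have hg0 : g 0 = 0 := by simp only [hgdef, zero_smul, add_zero, grad_zero_at_max hf hmode, inner_zero_left]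
  have hgd0 : HasDerivAt g q 0 := by
    have := g_hasDerivAt hg xs v 0
    simpa only [zero_smul, add_zero, hqdef, hgdef] using this
  -- eventually g t > 0 for t in (0, ·)
  have h1 : ∀ᶠ t in 𝓝[>] (0:ℝ), 0 < g t := by
    have hslope := hasDerivAt_iff_tendsto_slope.1 hgd0
    have hev : ∀ᶠ t in 𝓝[≠] (0:ℝ), q / 2 < slope g 0 t :=
      hslope.eventually (eventually_gt_nhds (half_lt_self hq))
    have hev' : ∀ᶠ t in 𝓝[>] (0:ℝ), q / 2 < slope g 0 t :=
      hev.filter_mono (nhdsWithin_mono 0 (fun t ht => ne_of_gt ht))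
    filter_upwards [hev', self_mem_nhdsWithin] with t ht ht0
    have hts : slope g 0 t = g t / t := by simp [slope_def_field, hg0]
    rw [hts] at ht
    have h2 : 0 < g t / t := lt_trans (half_pos hq) ht
    have := mul_pos h2 (show (0:ℝ) < t from ht0)
    rwa [div_mul_cancel₀ _ (ne_of_gt (show (0:ℝ) < t from ht0))] at this
  have h2 : ∀ᶠ t in 𝓝[>] (0:ℝ), f (xs + t • v) ≤ f xs := by
    have hc : Tendsto (fun t : ℝ => xs + t • v) (𝓝 0) (𝓝 xs) := by
      have hcont : Continuous fun t : ℝ => xs + t • v :=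
        continuous_const.add (continuous_id.smul continuous_const)
      simpa using hcont.tendsto 0
    exact (hc.eventually hmode).filter_mono nhdsWithin_le_nhds
  obtain ⟨u, hu, hsub⟩ := mem_nhdsGT_iff_exists_Ioo_subset.1 (h1.and h2)
  have hu0 : (0:ℝ) < u := hu
  have hmono : StrictMonoOn (fun t : ℝ => f (xs + t • v)) (Icc 0 (u/2)) := by
    apply strictMonoOn_of_deriv_pos (convex_Icc 0 (u/2))
    · exact Continuous.continuousOn (by
        exact Differentiable.continuous
          (fun t => (phi_hasDerivAt hf xs v t).differentiableAt))
    · intro t ht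
      rw [interior_Icc] at ht
      rw [(phi_hasDerivAt hf xs v t).deriv]
      exact (hsub ⟨ht.1, ht.2.trans (by linarith)⟩).1
  have hlt := hmono (left_mem_Icc.2 (by linarith)) (right_mem_Icc.2 (by linarith)) (by linarith)
  have hle := (hsub (show (u/2 : ℝ) ∈ Ioo 0 u from ⟨by linarith, by linarith⟩)).2
  simp only [zero_smul, add_zero] at hlt
  linarith

end SecondOrder

section Symm
variable {d : ℕ} {f : Euc d → ℝ}

lemma hess_symm (hf : Differentiable ℝ f) (hg : Differentiable ℝ (gradient f)) (x v w : Euc d) :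
    ⟪(hess f x) v, w⟫ = ⟪(hess f x) w, v⟫ := by
  set L : Euc d →L[ℝ] StrongDual ℝ (Euc d) :=
    (InnerProductSpace.toDualMap ℝ (Euc d)).toContinuousLinearMap with hL
  have hLapp : ∀ u z : Euc d, L u z = ⟪u, z⟫ := fun u z => rfl
  have hf' : ∀ y, HasFDerivAt f (L (gradient f y)) y := by
    intro y
    have h1 := (hf y).hasGradientAt.hasFDerivAt
    exact h1
  have hx : HasFDerivAt (fun y => L (gradient f y)) (L.comp (hess f x)) x :=
    L.hasFDerivAt.comp x (hg x).hasFDerivAt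
  have := second_derivative_symmetric hf' hx v w
  simpa [hLapp] using this

lemma op_neg_def {d : ℕ} (H : Euc d →L[ℝ] Euc d)
    (hsym : ∀ v w : Euc d, ⟪H v, w⟫ = ⟪H w, v⟫)
    (hpsd : ∀ w : Euc d, ⟪H w, w⟫ ≤ 0)
    (hinj : Function.Injective H) {v : Euc d} (hv : v ≠ 0) : ⟪H v, v⟫ < 0 := by
  rcases lt_or_eq_of_le (hpsd v) with h | h
  · exact h
  exfalso
  have hHv : H v ≠ 0 := by
    intro h0
    exact hv (hinj (by rw [h0, map_zero]))
  obtain ⟨w, hw⟩ : ∃ w, w = H v := ⟨H v, rfl⟩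
  obtain ⟨c, hc⟩ : ∃ c, c = ‖H v‖ ^ 2 := ⟨_, rfl⟩
  obtain ⟨X, hX⟩ : ∃ X : ℝ, X = ⟪H w, w⟫ := ⟨_, rfl⟩
  have hcpos : (0:ℝ) < c := by rw [hc]; exact pow_pos (norm_pos_iff.mpr hHv) 2
  have hexp : ∀ t : ℝ, 2 * t * c + t ^ 2 * X ≤ 0 := by
    intro t
    have h1 := hpsd (v + t • w)
    have h2 : ⟪H (v + t • w), v + t • w⟫ =
        ⟪H v, v⟫ + t * ⟪H v, w⟫ + t * ⟪H w, v⟫ + t ^ 2 * ⟪H w, w⟫ := by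
      simp only [map_add, ContinuousLinearMap.map_smul, inner_add_left, inner_add_right,
        real_inner_smul_left, real_inner_smul_right]
      ring
    have hvw : ⟪H v, w⟫ = c := by
      rw [hw, hc, ← real_inner_self_eq_norm_sq]
    rw [hsym w v, hvw, ← h.symm, ← hX] at h2
    rw [h2] at h1
    linarith
  have hlin : ∀ t : ℝ, 0 < t → 2 * c + t * X ≤ 0 := by
    intro t ht
    by_contra hcon
    push_neg at hcon
    have := mul_pos ht hcon
    nlinarith [hexp t]
  rcases le_or_gt 0 X with hX0 | hX0
  · have := hlin 1 one_pos
    linarith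
  · have hXne : X ≠ 0 := ne_of_lt hX0
    have hpos : 0 < c / (-X) := div_pos hcpos (by linarith)
    have := hlin (c / (-X)) hpos
    have heq : c / (-X) * X = -c := by
      rw [div_mul_eq_mul_div, mul_div_assoc, div_neg, div_self hXne, mul_neg_one]
    rw [heq] at this
    linarith

lemma hess_neg_def_at_max (hf : Differentiable ℝ f) (hg : Differentiable ℝ (gradient f))
    {xs : Euc d} (hmode : IsLocalMax f xs) (hbij : Function.Bijective (hess f xs))
    {v : Euc d} (hv : v ≠ 0) : 0 < ⟪-((hess f xs) v), v⟫ := by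
  rw [inner_neg_left, neg_pos]
  exact op_neg_def (hess f xs) (hess_symm hf hg xs)
    (hess_neg_semidef_at_max hf hg hmode) hbij.injective hv

lemma lamMin_pos_at_max (hd : 0 < d) (hf : Differentiable ℝ f) (hg : Differentiable ℝ (gradient f))
    {xs : Euc d} (hmode : IsLocalMax f xs) (hbij : Function.Bijective (hess f xs)) :
    0 < lamMin f xs := by
  have himg : ray (hess f xs) =
      (fun v : Euc d => ⟪-((hess f xs) v), v⟫) '' sphere (0 : Euc d) 1 := by
    ext r
    constructor
    · rintro ⟨v, hv, rfl⟩
      exact ⟨v, by rwa [mem_sphere_zero_iff_norm], rfl⟩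
    · rintro ⟨v, hv, rfl⟩
      exact ⟨v, by rwa [← mem_sphere_zero_iff_norm], rfl⟩
  have hcomp : IsCompact ((fun v : Euc d => ⟪-((hess f xs) v), v⟫) '' sphere (0 : Euc d) 1) :=
    (isCompact_sphere 0 1).image (by
      exact Continuous.inner (continuous_neg.comp (hess f xs).continuous) continuous_id)
  have hne : (ray (hess f xs)).Nonempty := ray_nonempty hd _
  rw [himg] at hne
  have hmem := hcomp.sInf_mem hne
  rw [lamMin_eq, himg]
  obtain ⟨v, hv, heq⟩ := hmem
  rw [← heq]
  apply hess_neg_def_at_max hf hg hmode hbij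
  intro h0
  rw [mem_sphere_zero_iff_norm] at hv
  rw [h0] at hv
  simp at hv

end Symm

set_option maxHeartbeats 1000000 in
/-- Near a mode `x⋆` with `s⋆ = f(x⋆)`, for a suitable `δ > 0` the constant
`C = sup_{x ∈ closedBall(x⋆,δ)} max (√λ_max(x)) (2/√λ_min(x))` is finite, and for every
`s ∈ (s⋆ − δ²/C², s⋆)` the level cluster of `x⋆` at level `s` is squeezed between the balls
of radii `√(s⋆−s)/C` and `C√(s⋆−s)` around `x⋆`. -/
theorem level_cluster_between_balls_near_mode
    {d : ℕ} (hd : 0 < d) (f : Euc d → ℝ) (hf : IsNiceDensity f)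
    (xstar : Euc d) (hmode : IsLocalMax f xstar) :
    ∃ δ > (0:ℝ), ∃ C : ℝ,
      C = sSup ((fun x => max (Real.sqrt (lamMax f x)) (2 / Real.sqrt (lamMin f x))) ''
        closedBall xstar δ) ∧
      BddAbove ((fun x => max (Real.sqrt (lamMax f x)) (2 / Real.sqrt (lamMin f x))) ''
        closedBall xstar δ) ∧
      ∀ s ∈ Ioo (f xstar - δ^2 / C^2) (f xstar),
        closedBall xstar (Real.sqrt (f xstar - s) / C)
            ⊆ connectedComponentIn {y : Euc d | s ≤ f y} xstar ∧
        connectedComponentIn {y : Euc d | s ≤ f y} xstar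
            ⊆ ball xstar (C * Real.sqrt (f xstar - s)) := by
  obtain ⟨hnn, hint, hcoc, hdiff, hgdiff, hMf, hMg, ⟨M, hM⟩, hucf, hucg, huch, hmorse⟩ := hf
  have hgrad0 : gradient f xstar = 0 := grad_zero_at_max hdiff hmode
  have hbij := hmorse xstar hgrad0
  have hlam0 : 0 < lamMin f xstar := lamMin_pos_at_max hd hdiff hgdiff hmode hbij
  set m : ℝ := lamMin f xstar / 2 with hm
  have hmpos : 0 < m := by positivity
  obtain ⟨δ', hδ'pos, hδ'⟩ := Metric.uniformContinuous_iff.1 huch m hmpos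
  set δ : ℝ := δ' / 2 with hδdef
  have hδpos : 0 < δ := by positivity
  have hclose : ∀ x ∈ closedBall xstar δ, ‖hess f x - hess f xstar‖ < m := by
    intro x hx
    have h1 : dist x xstar < δ' := lt_of_le_of_lt (mem_closedBall.1 hx) (by linarith)
    have := hδ' h1
    rwa [dist_eq_norm] at this
  have hlb : ∀ x ∈ closedBall xstar δ, m ≤ lamMin f x := by
    intro x hx
    have h1 := lamMin_ge_of_close hd f x xstar
    have h2 := hclose x hx
    rw [hm]
    linarith
  have hub : ∀ x ∈ closedBall xstar δ, lamMax f x ≤ M := by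
    intro x hx
    exact (lamMax_le_norm hd f x).trans (hM x)
  have hMnn : (0:ℝ) ≤ M := le_trans (norm_nonneg _) (hM xstar)
  -- boundedness
  have hBdd : BddAbove ((fun x => max (Real.sqrt (lamMax f x)) (2 / Real.sqrt (lamMin f x))) ''
      closedBall xstar δ) := by
    refine ⟨max (Real.sqrt M) (2 / Real.sqrt m), ?_⟩
    rintro r ⟨x, hx, rfl⟩
    apply max_le_max
    · exact Real.sqrt_le_sqrt (hub x hx)
    · apply div_le_div_of_nonneg_left (by norm_num) (Real.sqrt_pos.2 hmpos)
      exact Real.sqrt_le_sqrt (hlb x hx)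
  set C : ℝ := sSup ((fun x => max (Real.sqrt (lamMax f x)) (2 / Real.sqrt (lamMin f x))) ''
      closedBall xstar δ) with hCdef
  have hxsmem : xstar ∈ closedBall xstar δ := mem_closedBall_self hδpos.le
  have hC1 : ∀ x ∈ closedBall xstar δ, Real.sqrt (lamMax f x) ≤ C := fun x hx =>
    (le_max_left _ _).trans (le_csSup hBdd (mem_image_of_mem _ hx))
  have hC2 : ∀ x ∈ closedBall xstar δ, 2 / Real.sqrt (lamMin f x) ≤ C := fun x hx =>
    (le_max_right _ _).trans (le_csSup hBdd (mem_image_of_mem _ hx))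
  -- C ≥ 1
  have hminmax := lamMin_le_lamMax hd f xstar
  have hC1' : 1 ≤ C := by
    rcases le_or_gt (lamMax f xstar) 4 with h4 | h4
    · have hmin4 : lamMin f xstar ≤ 4 := hminmax.trans h4
      have : Real.sqrt (lamMin f xstar) ≤ 2 := by
        rw [show (2:ℝ) = Real.sqrt 4 by rw [show (4:ℝ) = 2^2 by norm_num, Real.sqrt_sq]; norm_num]
        exact Real.sqrt_le_sqrt hmin4
      have hsp : 0 < Real.sqrt (lamMin f xstar) := Real.sqrt_pos.2 hlam0
      have : 1 ≤ 2 / Real.sqrt (lamMin f xstar) := by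
        rw [le_div_iff₀ hsp]
        linarith
      exact this.trans (hC2 xstar hxsmem)
    · have : 2 ≤ Real.sqrt (lamMax f xstar) := by
        rw [show (2:ℝ) = Real.sqrt 4 by rw [show (4:ℝ) = 2^2 by norm_num, Real.sqrt_sq]; norm_num]
        exact Real.sqrt_le_sqrt h4.le
      linarith [hC1 xstar hxsmem]
  have hCpos : 0 < C := by linarith
  -- quantified eigenvalue bounds
  have hlamMaxC : ∀ x ∈ closedBall xstar δ, lamMax f x ≤ C^2 := by
    intro x hx
    have h0 : 0 ≤ lamMax f x := le_trans (by linarith [hlb x hx]) (lamMin_le_lamMax hd f x)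
    have := hC1 x hx
    nlinarith [Real.sq_sqrt h0, Real.sqrt_nonneg (lamMax f x)]
  have hlamMinC : ∀ x ∈ closedBall xstar δ, 4 / C^2 ≤ lamMin f x := by
    intro x hx
    have hminpos : 0 < lamMin f x := lt_of_lt_of_le hmpos (hlb x hx)
    have hsp : 0 < Real.sqrt (lamMin f x) := Real.sqrt_pos.2 hminpos
    have h2 : 2 / C ≤ Real.sqrt (lamMin f x) := by
      rw [div_le_iff₀ hCpos]
      have := hC2 x hx
      rw [div_le_iff₀ hsp] at this
      linarith [mul_comm C (Real.sqrt (lamMin f x))]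
    have h3 : (2 / C)^2 ≤ lamMin f x := by
      nlinarith [Real.sq_sqrt hminpos.le, div_nonneg (by norm_num : (0:ℝ) ≤ 2) hCpos.le]
    have : (2 / C)^2 = 4 / C^2 := by
      rw [div_pow]; norm_num
    linarith
  -- Rayleigh bounds for arbitrary vectors
  have hquad : ∀ y ∈ closedBall xstar δ, ∀ v : Euc d,
      -(C^2 * ‖v‖^2) ≤ ⟪(hess f y) v, v⟫ ∧ ⟪(hess f y) v, v⟫ ≤ -(4 / C^2 * ‖v‖^2) := by
    intro y hy v
    rcases eq_or_ne v 0 with rfl | hv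
    · simp
    · have hnv : 0 < ‖v‖ := norm_pos_iff.mpr hv
      set u : Euc d := ‖v‖⁻¹ • v with hu
      have hunorm : ‖u‖ = 1 := norm_smul_inv_norm hv
      have hvu : v = ‖v‖ • u := by
        rw [hu, smul_smul, mul_inv_cancel₀ (ne_of_gt hnv), one_smul]
      have hinner : ⟪(hess f y) v, v⟫ = ‖v‖^2 * ⟪(hess f y) u, u⟫ := by
        conv_lhs => rw [hvu]
        rw [ContinuousLinearMap.map_smul, real_inner_smul_left, real_inner_smul_right]
        ring
      have hray1 := lamMin_le_rayleigh hd f y hunorm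
      have hray2 := rayleigh_le_lamMax hd f y hunorm
      rw [inner_neg_left] at hray1 hray2
      have hb1 := hlamMaxC y hy
      have hb2 := hlamMinC y hy
      constructor
      · rw [hinner]; nlinarith [sq_nonneg ‖v‖]
      · rw [hinner]; nlinarith [sq_nonneg ‖v‖]
  -- Taylor bounds on the ball
  have key : ∀ x ∈ closedBall xstar δ,
      f xstar - C^2 * ‖x - xstar‖^2 / 2 ≤ f x ∧
      f x ≤ f xstar - 4 / C^2 * ‖x - xstar‖^2 / 2 := by
    intro x hx
    set v : Euc d := x - xstar with hv
    have hxv : xstar + v = x := by rw [hv]; abel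
    have hvnorm : ‖v‖ ≤ δ := by
      rw [hv, ← dist_eq_norm]
      exact mem_closedBall.1 hx
    have hmem : ∀ t ∈ Icc (0:ℝ) 1, xstar + t • v ∈ closedBall xstar δ := by
      intro t ht
      rw [mem_closedBall, dist_eq_norm, add_sub_cancel_left, norm_smul, Real.norm_eq_abs,
        abs_of_nonneg ht.1]
      calc t * ‖v‖ ≤ 1 * ‖v‖ := mul_le_mul_of_nonneg_right ht.2 (norm_nonneg v)
      _ ≤ δ := by rwa [one_mul]
    constructor
    · have := taylor_lower hdiff hgdiff xstar v hgrad0 (C^2 * ‖v‖^2)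
        (fun t ht => (hquad _ (hmem t ht) v).1)
      rw [hxv] at this
      linarith
    · have := taylor_upper hdiff hgdiff xstar v hgrad0 (4 / C^2 * ‖v‖^2)
        (fun t ht => (hquad _ (hmem t ht) v).2)
      rw [hxv] at this
      linarith
  -- conclusion
  refine ⟨δ, hδpos, C, rfl, hBdd, ?_⟩
  rintro s ⟨hs1, hs2⟩
  have hss : 0 < f xstar - s := by linarith
  have hsqpos : 0 < Real.sqrt (f xstar - s) := Real.sqrt_pos.2 hss
  have hsq2 : Real.sqrt (f xstar - s) ^ 2 = f xstar - s := Real.sq_sqrt hss.le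
  have hsqlt : Real.sqrt (f xstar - s) < δ / C := by
    have h1 : f xstar - s < δ^2 / C^2 := by linarith
    have h2 : δ^2 / C^2 = (δ / C)^2 := (div_pow δ C 2).symm
    have := Real.sqrt_lt_sqrt hss.le h1
    rwa [h2, Real.sqrt_sq (by positivity)] at this
  constructor
  · -- lower inclusion
    have hrδ : Real.sqrt (f xstar - s) / C ≤ δ := by
      rw [div_le_iff₀ hCpos]
      have h2 : δ / C ≤ δ := div_le_self hδpos.le hC1'
      have h3 : δ ≤ δ * C := le_mul_of_one_le_right hδpos.le hC1'
      linarith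
    apply IsPreconnected.subset_connectedComponentIn
    · exact (convex_closedBall xstar _).isPreconnected
    · exact mem_closedBall_self (by positivity)
    · intro x hx
      have hxδ : x ∈ closedBall xstar δ :=
        closedBall_subset_closedBall hrδ hx
      have hk := (key x hxδ).1
      have hxr : ‖x - xstar‖ ≤ Real.sqrt (f xstar - s) / C := by
        rw [← dist_eq_norm]; exact mem_closedBall.1 hx
      have hxr2 : ‖x - xstar‖^2 ≤ (f xstar - s) / C^2 := by
        have := pow_le_pow_left₀ (norm_nonneg _) hxr 2
        rwa [div_pow, hsq2] at this
      have : C^2 * ‖x - xstar‖^2 ≤ f xstar - s := by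
        have h5 := mul_le_mul_of_nonneg_left hxr2 (sq_nonneg C)
        have h6 : C^2 * ((f xstar - s) / C^2) = f xstar - s := by field_simp
        linarith
      show s ≤ f x
      linarith
  · -- upper inclusion
    intro y hy
    by_contra hyout
    rw [mem_ball, not_lt] at hyout
    set R : ℝ := C * Real.sqrt (f xstar - s) with hR
    have hR0 : 0 < R := mul_pos hCpos hsqpos
    have hRδ : R < δ := by
      have := mul_lt_mul_of_pos_left hsqlt hCpos
      rwa [mul_div_cancel₀ δ (ne_of_gt hCpos)] at this
    have hxstar_in : xstar ∈ connectedComponentIn {y : Euc d | s ≤ f y} xstar :=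
      mem_connectedComponentIn (by simpa using hs2.le)
    have hsqrt2 : (1:ℝ) < Real.sqrt 2 := by
      rw [show (1:ℝ) = Real.sqrt 1 by rw [Real.sqrt_one]]
      exact Real.sqrt_lt_sqrt (by norm_num) (by norm_num)
    set t : ℝ := (R / Real.sqrt 2 + R) / 2 with ht
    have htlow : R / Real.sqrt 2 < t := by
      rw [ht]
      have : R / Real.sqrt 2 < R := by
        rw [div_lt_iff₀ (by linarith)]
        nlinarith
      linarith
    have hthigh : t < R := by
      rw [ht]
      have : R / Real.sqrt 2 < R := by
        rw [div_lt_iff₀ (by linarith)]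
        nlinarith
      linarith
    have htpos : 0 < t := lt_trans (by positivity) htlow
    have hcont : ContinuousOn (fun z : Euc d => dist z xstar)
        (connectedComponentIn {y : Euc d | s ≤ f y} xstar) :=
      (Continuous.dist continuous_id continuous_const).continuousOn
    have hiv := (isPreconnected_connectedComponentIn
        (F := {y : Euc d | s ≤ f y}) (x := xstar)).intermediate_value
        hxstar_in hy hcont
    have htmem : t ∈ Icc (dist xstar xstar) (dist y xstar) := by
      rw [dist_self]
      exact ⟨htpos.le, le_trans hthigh.le hyout⟩
    obtain ⟨z, hzK, hzt0⟩ := hiv htmem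
    have hzt : dist z xstar = t := hzt0
    have hzS : s ≤ f z := connectedComponentIn_subset {y : Euc d | s ≤ f y} xstar hzK
    have hzδ : z ∈ closedBall xstar δ := by
      rw [mem_closedBall, hzt]
      linarith
    have hk := (key z hzδ).2
    have hznorm : ‖z - xstar‖ = t := by rw [← dist_eq_norm, hzt]
    have ht2 : R^2 / 2 < t^2 := by
      have h1 : (R / Real.sqrt 2)^2 = R^2 / 2 := by
        rw [div_pow, Real.sq_sqrt (by norm_num : (0:ℝ) ≤ 2)]
      nlinarith [div_nonneg hR0.le (by linarith : (0:ℝ) ≤ Real.sqrt 2)]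
    have hR2 : R^2 = C^2 * (f xstar - s) := by
      rw [hR, mul_pow, hsq2]
    have hfinal : f z < s := by
      rw [hznorm] at hk
      have h4 : 4 / C^2 * t^2 / 2 > f xstar - s := by
        rw [hR2] at ht2
        have hC2pos : 0 < C^2 := by positivity
        rw [gt_iff_lt, div_mul_eq_mul_div, div_div, lt_div_iff₀ (by linarith)]
        nlinarith
      linarith
    linarith
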